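/- Let G be a graph with vertex partition V_ℓ ∪ V_f and weights w_ℓ, w_f : V → ℝ≥0. In the bilevel independent set problem with sum-type leader objective, bottleneck follower objective and optimistic follower, suppose the leader plays a nonempty independent set L with bottleneck value d = min_{v∈L} w_f(v). Then the follower's optimal reactions are exactly the maximum-w_ℓ-weight independent sets F of the induced subgraph G[S], where S = { v ∈ V_f : v ∉ N(L) and w_f(v) ≥ d }, together possibly with any such F; in particular the leader's resulting value is Σ_{v∈L} w_ℓ(v) plus the maximum w_ℓ-weight of an independent set in G[S]. -/

import Mathlib

/-- A set of vertices is independent in `G`. -/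
def IndepSet {V : Type*} (G : SimpleGraph V) (S : Set V) : Prop :=
  S.Pairwise fun u v => ¬ G.Adj u v

/-- A feasible follower reaction `F` to the leader's action `L`. -/
def FReaction {V : Type*} [DecidableEq V] (G : SimpleGraph V) (Vf : Set V)
    (L F : Finset V) : Prop :=
  ↑F ⊆ Vf ∧ IndepSet G ↑(L ∪ F) ∧ (L ∪ F).Nonempty

/-- A follower's possible (bottleneck-optimal) reaction. -/
def FPossible {V : Type*} [DecidableEq V] (G : SimpleGraph V) (Vf : Set V)
    (wf : V → ℝ) (L F : Finset V) : Prop :=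
  FReaction G Vf L F ∧ ∀ F' : Finset V, FReaction G Vf L F' →
    sInf (wf '' ↑(L ∪ F')) ≤ sInf (wf '' ↑(L ∪ F))

/-- An optimistic follower's optimal reaction: among the bottleneck-optimal
reactions it maximizes the leader's sum. -/
def FOptimistic {V : Type*} [DecidableEq V] (G : SimpleGraph V) (Vf : Set V)
    (wf wl : V → ℝ) (L F : Finset V) : Prop :=
  FPossible G Vf wf L F ∧ ∀ F' : Finset V, FPossible G Vf wf L F' →
    (∑ v ∈ L ∪ F', wl v) ≤ ∑ v ∈ L ∪ F, wl v

/-- sum leader, bottleneck follower, optimistic.  With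
`d = min_{v∈L} w_f v` and `S = {v ∈ V_f : v ∉ N(L), w_f v ≥ d}`, the follower's
optimal reactions to a nonempty independent `L ⊆ V_ℓ` are exactly the independent
subsets of `G[S]` of maximum `w_ℓ`-weight, and the leader's resulting value is
`Σ_{v∈L} w_ℓ v` plus the maximum `w_ℓ`-weight of an independent set in `G[S]`. -/
theorem stmt_17 {V : Type*} [Fintype V] [DecidableEq V] (G : SimpleGraph V)
    (Vl Vf : Set V) (hpart : Vl ∪ Vf = Set.univ) (hdis : Disjoint Vl Vf)
    (wl wf : V → ℝ) (hwl : ∀ v, 0 ≤ wl v) (hwf : ∀ v, 0 ≤ wf v)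
    (L : Finset V) (hL : L.Nonempty) (hLl : ↑L ⊆ Vl)
    (hLind : IndepSet G ↑L) :
    (∀ F : Finset V,
      FOptimistic G Vf wf wl L F ↔
        (↑F ⊆ {v ∈ Vf | (∀ u ∈ L, ¬ G.Adj u v) ∧ sInf (wf '' ↑L) ≤ wf v} ∧
          IndepSet G ↑F ∧
          ∀ F' : Finset V,
            ↑F' ⊆ {v ∈ Vf | (∀ u ∈ L, ¬ G.Adj u v) ∧ sInf (wf '' ↑L) ≤ wf v} →
            IndepSet G ↑F' → (∑ v ∈ F', wl v) ≤ ∑ v ∈ F, wl v)) ∧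
    (∀ F : Finset V, FOptimistic G Vf wf wl L F →
      (∑ v ∈ L ∪ F, wl v) = (∑ v ∈ L, wl v) +
        sSup {x : ℝ | ∃ F' : Finset V,
          ↑F' ⊆ {v ∈ Vf | (∀ u ∈ L, ¬ G.Adj u v) ∧ sInf (wf '' ↑L) ≤ wf v} ∧
          IndepSet G ↑F' ∧ x = ∑ v ∈ F', wl v}) := by

  classical
  set d := sInf (wf '' ↑L) with hd
  set S : Set V := {v ∈ Vf | (∀ u ∈ L, ¬ G.Adj u v) ∧ d ≤ wf v} with hSdef
  have hSVf : S ⊆ Vf := fun v hv => hv.1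
  have hdisLF : ∀ F : Finset V, ↑F ⊆ Vf → Disjoint L F := by
    intro F hF
    rw [Finset.disjoint_left]
    intro v hvL hvF
    exact Set.disjoint_left.mp hdis (hLl hvL) (hF hvF)
  have hsum : ∀ F : Finset V, ↑F ⊆ Vf →
      (∑ v ∈ L ∪ F, wl v) = (∑ v ∈ L, wl v) + ∑ v ∈ F, wl v := by
    intro F hF
    exact Finset.sum_union (hdisLF F hF)
  have hdle : ∀ v ∈ L, d ≤ wf v := by
    intro v hv
    exact csInf_le ((L.finite_toSet.image wf).bddBelow) ⟨v, hv, rfl⟩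
  have hEmpty : FReaction G Vf L ∅ := by
    refine ⟨by simp, by simpa using hLind, by simpa using hL⟩
  have hA : ∀ F' : Finset V, FReaction G Vf L F' → sInf (wf '' ↑(L ∪ F')) ≤ d := by
    intro F' _
    refine csInf_le_csInf (((L ∪ F').finite_toSet.image wf).bddBelow)
      ((hL.to_set.image wf)) ?_
    exact Set.image_mono (f := wf) (by rw [Finset.coe_union]; exact Set.subset_union_left)
  have hB : ∀ F : Finset V, ↑F ⊆ S → d ≤ sInf (wf '' ↑(L ∪ F)) := by
    intro F hF
    apply le_csInf
    · exact ((hL.mono Finset.subset_union_left).to_set.image wf)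
    · rintro x ⟨v, hv, rfl⟩
      rw [Finset.mem_coe, Finset.mem_union] at hv
      rcases hv with hv | hv
      · exact hdle v hv
      · exact (hF hv).2.2
  have hIndepUnion : ∀ F : Finset V, ↑F ⊆ S → IndepSet G ↑F → IndepSet G ↑(L ∪ F) := by
    intro F hF hFind
    rw [Finset.coe_union]
    unfold IndepSet
    rw [Set.pairwise_union]
    refine ⟨hLind, hFind, ?_⟩
    intro a ha b hb _
    have hnab : ¬ G.Adj a b := (hF hb).2.1 a ha
    exact ⟨hnab, fun h => hnab h.symm⟩
  have hC : ∀ F : Finset V, FPossible G Vf wf L F ↔ ↑F ⊆ S ∧ IndepSet G ↑F := by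
    intro F
    constructor
    · rintro ⟨⟨hFVf, hind, hne⟩, hopt⟩
      have hdF : d ≤ sInf (wf '' ↑(L ∪ F)) := by
        simpa using hopt ∅ hEmpty
      have hindU : Set.Pairwise (↑L ∪ ↑F) (fun u v => ¬ G.Adj u v) := by
        rw [← Finset.coe_union]; exact hind
      rw [Set.pairwise_union] at hindU
      refine ⟨?_, hindU.2.1⟩
      intro v hv
      refine ⟨hFVf hv, ?_, ?_⟩
      · intro u hu
        have hne' : u ≠ v := by
          intro h; subst h
          exact Set.disjoint_left.mp hdis (hLl hu) (hFVf hv)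
        exact (hindU.2.2 u hu v hv hne').1
      · calc d ≤ sInf (wf '' ↑(L ∪ F)) := hdF
          _ ≤ wf v := csInf_le (((L ∪ F).finite_toSet.image wf).bddBelow)
              ⟨v, by simp [Finset.mem_coe.mp hv], rfl⟩
    · rintro ⟨hFS, hFind⟩
      have hreact : FReaction G Vf L F :=
        ⟨fun v hv => (hFS hv).1, hIndepUnion F hFS hFind,
          hL.mono Finset.subset_union_left⟩
      exact ⟨hreact, fun F' hF' => le_trans (hA F' hF') (hB F hFS)⟩
  have hMain : ∀ F : Finset V,
      FOptimistic G Vf wf wl L F ↔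
        (↑F ⊆ S ∧ IndepSet G ↑F ∧
          ∀ F' : Finset V, ↑F' ⊆ S → IndepSet G ↑F' →
            (∑ v ∈ F', wl v) ≤ ∑ v ∈ F, wl v) := by
    intro F
    constructor
    · rintro ⟨hposs, hopt⟩
      obtain ⟨hFS, hFind⟩ := (hC F).mp hposs
      refine ⟨hFS, hFind, ?_⟩
      intro F' hF'S hF'ind
      have := hopt F' ((hC F').mpr ⟨hF'S, hF'ind⟩)
      rw [hsum F (fun v hv => (hFS hv).1), hsum F' (fun v hv => (hF'S hv).1)] at this
      linarith
    · rintro ⟨hFS, hFind, hmax⟩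
      refine ⟨(hC F).mpr ⟨hFS, hFind⟩, ?_⟩
      intro F' hposs'
      obtain ⟨hF'S, hF'ind⟩ := (hC F').mp hposs'
      rw [hsum F (fun v hv => (hFS hv).1), hsum F' (fun v hv => (hF'S hv).1)]
      linarith [hmax F' hF'S hF'ind]
  refine ⟨hMain, ?_⟩
  intro F hFopt
  obtain ⟨hFS, hFind, hmax⟩ := (hMain F).mp hFopt
  have hmem : (∑ v ∈ F, wl v) ∈ {x : ℝ | ∃ F' : Finset V,
      ↑F' ⊆ S ∧ IndepSet G ↑F' ∧ x = ∑ v ∈ F', wl v} := ⟨F, hFS, hFind, rfl⟩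
  have hsup : sSup {x : ℝ | ∃ F' : Finset V,
      ↑F' ⊆ S ∧ IndepSet G ↑F' ∧ x = ∑ v ∈ F', wl v} = ∑ v ∈ F, wl v := by
    apply le_antisymm
    · apply csSup_le ⟨_, hmem⟩
      rintro x ⟨F', hF'S, hF'ind, rfl⟩
      exact hmax F' hF'S hF'ind
    · apply le_csSup ?_ hmem
      refine ⟨∑ v ∈ F, wl v, ?_⟩
      rintro x ⟨F', hF'S, hF'ind, rfl⟩
      exact hmax F' hF'S hF'ind
  rw [hsup, hsum F (fun v hv => (hFS hv).1)]
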